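/- Let α ≥ 2 be an integer alphabet size and x^n a string of length n over an alphabet of size α, and let c(x^n) be the maximum number of distinct phrases in any parsing of x^n into distinct strings. Then c(x^n) ≤ n·log₂α / ((1-ε_n)·log₂ n) for some sequence ε_n → 0 independent of x^n. -/

import Mathlib

open Filter Real List

lemma short_count {X : Type*} [Fintype X] [Nonempty X] (m : ℕ) (L : List (List X))
    (hnd : L.Nodup) (hlen : ∀ w ∈ L, w.length ≤ m) :
    L.length ≤ (m + 1) * Fintype.card X ^ m := by
  classical
  have x0 : X := Classical.arbitrary X
  set f : List X → Fin (m+1) × (Fin m → X) :=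
    fun w => (⟨min w.length m, Nat.lt_succ_of_le (min_le_right _ _)⟩,
      fun i => w.getD i x0) with hf
  have hinj : Set.InjOn f {w | w.length ≤ m} := by
    intro a ha b hb hab
    simp only [hf, Prod.mk.injEq, Fin.mk.injEq] at hab
    have hla : min a.length m = a.length := min_eq_left ha
    have hlb : min b.length m = b.length := min_eq_left hb
    have hlen : a.length = b.length := by rw [← hla, ← hlb, hab.1]
    apply List.ext_getElem hlen
    intro i h1 h2
    have hi : i < m := lt_of_lt_of_le h1 ha
    have := congrFun hab.2 ⟨i, hi⟩
    simpa [List.getD_eq_getElem?_getD, List.getElem?_eq_getElem, h1, h2] using this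
  have hL : L.toFinset.card = L.length := List.toFinset_card_of_nodup hnd
  rw [← hL]
  calc L.toFinset.card ≤ Fintype.card (Fin (m+1) × (Fin m → X)) := by
        apply Finset.card_le_card_of_injOn f (fun _ _ => Finset.mem_univ _)
        intro a ha b hb hab
        exact hinj (hlen a (List.mem_toFinset.mp ha)) (hlen b (List.mem_toFinset.mp hb)) hab
    _ = (m + 1) * Fintype.card X ^ m := by simp



noncomputable def lzs (n : ℕ) : ℝ := Real.log (Real.logb 2 n) / Real.log n
noncomputable def lzm (A : ℝ) (n : ℕ) : ℕ := ⌊Real.logb A ((n : ℝ) / (Real.logb 2 n)^3)⌋₊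
noncomputable def lzB (A : ℝ) (n : ℕ) : ℝ :=
  ((lzm A n : ℝ) + 1) * A ^ (lzm A n) + (n : ℝ) / ((lzm A n : ℝ) + 1)
noncomputable def lzt (A : ℝ) (n : ℕ) : ℝ := lzB A n * Real.logb 2 n / ((n : ℝ) * Real.logb 2 A)

lemma lz_t_bounds (A : ℝ) (hA : 2 ≤ A) (n : ℕ) (h2 : 2 ≤ Real.logb 2 n)
    (hs : lzs n ≤ 1/100) :
    1/(1 - 3 * lzs n + 1/Real.logb A n) ≤ lzt A n ∧
      lzt A n ≤ 1/Real.logb 2 n + 1/(Real.logb 2 n)^2 + 1/(1 - 3 * lzs n) := by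
  have hl2 : (0:ℝ) < Real.log 2 := Real.log_pos (by norm_num)
  have hlogn : 2 * Real.log 2 ≤ Real.log n := by
    have := (le_div_iff₀ hl2).mp (by simpa [Real.logb] using h2)
    linarith [this]
  have hlogn0 : 0 < Real.log n := by linarith
  have hn1 : (1:ℝ) < n := by
    by_contra h
    exact absurd (Real.log_nonpos n.cast_nonneg (le_of_not_gt h)) (not_le.mpr hlogn0)
  have hn0 : (0:ℝ) < n := by linarith
  have hA1 : (1:ℝ) < A := by linarith
  have hla : 0 < Real.log A := Real.log_pos hA1
  have hla2 : Real.log 2 ≤ Real.log A := Real.log_le_log (by norm_num) hA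
  set Lg := Real.logb 2 n with hLg
  have hLg0 : 0 < Lg := by linarith
  set r := Real.logb A n with hr
  have hr0 : 0 < r := Real.logb_pos hA1 hn1
  have hrLg : r ≤ Lg := by
    rw [hr, hLg, Real.logb, Real.logb]
    exact div_le_div_of_nonneg_left hlogn0.le hl2 hla2 |>.trans_eq rfl
  set s := lzs n with hsdef
  have hs0 : 0 ≤ s := by
    apply div_nonneg _ hlogn0.le
    exact Real.log_nonneg (by linarith)
  -- g
  set g := Real.logb A ((n : ℝ) / Lg^3) with hg
  have hgeq : g = r * (1 - 3 * s) := by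
    rw [hg, hr, hsdef, lzs, Real.logb, Real.logb, Real.log_div (ne_of_gt hn0) (by positivity),
      Real.log_pow]
    field_simp
    ring
  have h1m3s : (97:ℝ)/100 ≤ 1 - 3 * s := by linarith
  have hg0 : 0 < g := by rw [hgeq]; positivity
  set m := lzm A n with hm
  have hmg : (m : ℝ) ≤ g := Nat.floor_le hg0.le
  have hgm : g < (m : ℝ) + 1 := Nat.lt_floor_add_one g
  have hm1 : (0:ℝ) < (m:ℝ) + 1 := by positivity
  -- A ^ m ≤ n / Lg^3
  have hApow : A ^ m ≤ (n : ℝ) / Lg^3 := by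
    rw [← Real.rpow_natCast]
    calc A ^ (m:ℝ) ≤ A ^ g := Real.rpow_le_rpow_of_exponent_le hA1.le hmg
      _ = (n : ℝ) / Lg^3 := Real.rpow_logb (by linarith) (by linarith) (by positivity)
  -- t rewrite
  have hlb2A : Real.logb 2 A = Real.log A / Real.log 2 := rfl
  have ht_eq : lzt A n = ((m:ℝ)+1) * A ^ m * r / n + r / ((m:ℝ)+1) := by
    rw [lzt, lzB, ← hm, hr]
    simp only [Real.logb]
    field_simp
  have hApow0 : 0 ≤ A ^ m := by positivity
  constructor
  · -- lower bound
    have heq : 1/(1 - 3*s + 1/r) = r / (g + 1) := by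
      rw [hgeq]; field_simp
    rw [heq, ht_eq]
    have h1 : r / (g+1) ≤ r / ((m:ℝ)+1) := by
      apply div_le_div_of_nonneg_left hr0.le hm1 (by linarith)
    have h2 : 0 ≤ ((m:ℝ)+1) * A ^ m * r / n := by positivity
    linarith
  · -- upper bound
    rw [ht_eq]
    have hT2 : r / ((m:ℝ)+1) ≤ 1 / (1 - 3*s) := by
      have : r / ((m:ℝ)+1) ≤ r / g := div_le_div_of_nonneg_left hr0.le hg0 (by linarith)
      apply this.trans_eq
      rw [hgeq]; field_simp
    have hT1 : ((m:ℝ)+1) * A ^ m * r / n ≤ 1/Lg + 1/Lg^2 := by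
      have step1 : ((m:ℝ)+1) * A ^ m * r / n ≤ ((m:ℝ)+1) * ((n:ℝ)/Lg^3) * r / n := by
        gcongr
      have step2 : ((m:ℝ)+1) * ((n:ℝ)/Lg^3) * r / n = ((m:ℝ)+1) * r / Lg^3 := by
        field_simp
      have hmr : (m:ℝ) + 1 ≤ Lg + 1 := by
        have : g ≤ r := by nlinarith [hgeq]
        linarith
      have step3 : ((m:ℝ)+1) * r / Lg^3 ≤ (Lg+1) * Lg / Lg^3 := by
        gcongr
      have step4 : (Lg+1) * Lg / Lg^3 = 1/Lg + 1/Lg^2 := by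
        field_simp
      calc ((m:ℝ)+1) * A ^ m * r / n ≤ _ := step1
        _ = _ := step2
        _ ≤ _ := step3
        _ = _ := step4
    linarith

lemma lzs_tendsto : Filter.Tendsto lzs Filter.atTop (nhds 0) := by
  have hl2 : (0:ℝ) < Real.log 2 := Real.log_pos (by norm_num)
  have hln : Filter.Tendsto (fun n : ℕ => Real.log n) atTop atTop :=
    Real.tendsto_log_atTop.comp tendsto_natCast_atTop_atTop
  have h1 : Filter.Tendsto (fun n : ℕ => Real.log (Real.log n) / Real.log n) atTop (nhds 0) :=
    Real.isLittleO_log_id_atTop.tendsto_div_nhds_zero.comp hln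
  have h2 : Filter.Tendsto (fun n : ℕ => Real.log (Real.log 2) / Real.log n) atTop (nhds 0) :=
    Filter.Tendsto.div_atTop tendsto_const_nhds hln
  have h3 := h1.sub h2
  rw [sub_zero] at h3
  apply h3.congr'
  filter_upwards [Filter.eventually_ge_atTop 2] with n hn
  have hn2 : (2:ℝ) ≤ (n:ℝ) := by exact_mod_cast hn
  have hlogn : 0 < Real.log n := Real.log_pos (by linarith)
  rw [lzs, Real.logb, Real.log_div hlogn.ne' hl2.ne']
  ring

lemma lzt_tendsto (A : ℝ) (hA : 2 ≤ A) :
    Filter.Tendsto (lzt A) Filter.atTop (nhds 1) := by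
  have hA1 : (1:ℝ) < A := by linarith
  have hLgtop : Filter.Tendsto (fun n : ℕ => Real.logb 2 n) atTop atTop :=
    (Real.tendsto_logb_atTop (by norm_num)).comp tendsto_natCast_atTop_atTop
  have hrtop : Filter.Tendsto (fun n : ℕ => Real.logb A n) atTop atTop :=
    (Real.tendsto_logb_atTop hA1).comp tendsto_natCast_atTop_atTop
  have hv : Filter.Tendsto (fun n : ℕ => 1 / Real.logb A n) atTop (nhds 0) := by
    simpa [one_div, Pi.inv_def] using hrtop.inv_tendsto_atTop
  have hw : Filter.Tendsto (fun n : ℕ => 1 / Real.logb 2 n) atTop (nhds 0) := by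
    simpa [one_div, Pi.inv_def] using hLgtop.inv_tendsto_atTop
  have hw2 : Filter.Tendsto (fun n : ℕ => 1 / (Real.logb 2 n)^2) atTop (nhds 0) := by
    have := hw.mul hw
    simpa [one_div, ← mul_inv, ← sq] using this
  have hden : Filter.Tendsto (fun n : ℕ => 1 - 3 * lzs n) atTop (nhds 1) := by
    have := (lzs_tendsto.const_mul 3).const_sub 1
    simpa using this
  have hlow : Filter.Tendsto (fun n : ℕ => 1 / (1 - 3 * lzs n + 1 / Real.logb A n))
      atTop (nhds 1) := by
    have hd : Filter.Tendsto (fun n : ℕ => 1 - 3 * lzs n + 1 / Real.logb A n) atTop (nhds 1) := by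
      simpa using hden.add hv
    simpa [one_div] using hd.inv₀ one_ne_zero
  have hupp : Filter.Tendsto
      (fun n : ℕ => 1 / Real.logb 2 n + 1 / (Real.logb 2 n)^2 + 1 / (1 - 3 * lzs n))
      atTop (nhds 1) := by
    have hinv : Filter.Tendsto (fun n : ℕ => 1 / (1 - 3 * lzs n)) atTop (nhds 1) := by
      simpa [one_div] using hden.inv₀ one_ne_zero
    simpa using (hw.add hw2).add hinv
  apply tendsto_of_tendsto_of_tendsto_of_le_of_le' hlow hupp
  · filter_upwards [hLgtop.eventually_ge_atTop 2,
      lzs_tendsto.eventually (gt_mem_nhds (by norm_num : (0:ℝ) < 1/100))] with n h2 hs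
    exact (lz_t_bounds A hA n h2 hs.le).1
  · filter_upwards [hLgtop.eventually_ge_atTop 2,
      lzs_tendsto.eventually (gt_mem_nhds (by norm_num : (0:ℝ) < 1/100))] with n h2 hs
    exact (lz_t_bounds A hA n h2 hs.le).2

lemma long_count' {X : Type*} (m : ℕ) (L L' : List (List X)) (hsub : L' <+ L)
    (h : ∀ w ∈ L', m < w.length) :
    (m + 1) * L'.length ≤ L.flatten.length := by
  classical
  have h1 : L'.length • (m + 1) ≤ (L'.map length).sum := by
    have := List.card_nsmul_le_sum (L'.map length) (m+1) (fun x hx => by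
      obtain ⟨w, hw, rfl⟩ := List.mem_map.mp hx
      exact Nat.succ_le_of_lt (h w hw))
    simpa using this
  have h2 : (L'.map length).sum ≤ (L.map length).sum :=
    List.Sublist.sum_le_sum (hsub.map length) (fun a _ => Nat.zero_le a)
  rw [List.length_flatten]
  calc (m+1) * L'.length = L'.length • (m+1) := by rw [smul_eq_mul, mul_comm]
    _ ≤ _ := h1.trans h2

/-- Lempel–Ziv bound on the number of distinct phrases: over an alphabet of size
`α ≥ 2` there is a sequence `ε_n → 0` (independent of the string) such that, for all
large `n`, every parsing of a string of length `n` into distinct (nonempty) phrases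
has at most `n·log₂α / ((1-ε_n)·log₂ n)` phrases. -/
theorem distinct_phrases_upper_bound {X : Type*} [Fintype X]
    (hα : 2 ≤ Fintype.card X) :
    ∃ (ε : ℕ → ℝ) (N : ℕ), Filter.Tendsto ε Filter.atTop (nhds 0) ∧
      ∀ n ≥ N, ∀ x : Fin n → X, ∀ L : List (List X),
        L.flatten = List.ofFn x → L.Nodup → (∀ w ∈ L, w ≠ []) →
        (L.length : ℝ) ≤
          (n : ℝ) * Real.logb 2 (Fintype.card X) / ((1 - ε n) * Real.logb 2 n) := by
  classical
  have hXne : Nonempty X := Fintype.card_pos_iff.mp (by omega)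
  set A : ℝ := (Fintype.card X : ℝ) with hAdef
  have hA : 2 ≤ A := by
    show (2:ℝ) ≤ (Fintype.card X : ℝ); exact_mod_cast hα
  have hA1 : (1:ℝ) < A := by linarith
  have ht := lzt_tendsto A hA
  have hLgtop : Filter.Tendsto (fun n : ℕ => Real.logb 2 n) atTop atTop :=
    (Real.tendsto_logb_atTop (by norm_num)).comp tendsto_natCast_atTop_atTop
  have hev : ∀ᶠ n : ℕ in atTop, 2 ≤ Real.logb 2 n ∧ lzs n < 1/100 :=
    (hLgtop.eventually_ge_atTop 2).and
      (lzs_tendsto.eventually (gt_mem_nhds (by norm_num : (0:ℝ) < 1/100)))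
  obtain ⟨N, hN⟩ := Filter.eventually_atTop.mp hev
  refine ⟨fun n => 1 - (lzt A n)⁻¹, N, ?_, ?_⟩
  · simpa using (ht.inv₀ one_ne_zero).const_sub 1
  · intro n hn x L hflat hnd hne
    obtain ⟨h2, _⟩ := hN n hn
    -- basic positivity
    have hl2 : (0:ℝ) < Real.log 2 := Real.log_pos (by norm_num)
    have hlogn : 2 * Real.log 2 ≤ Real.log n := by
      have := (le_div_iff₀ hl2).mp (by simpa [Real.logb] using h2)
      linarith [this]
    have hlogn0 : 0 < Real.log n := by linarith
    have hn1 : (1:ℝ) < n := by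
      by_contra h
      exact absurd (Real.log_nonpos n.cast_nonneg (le_of_not_gt h)) (not_le.mpr hlogn0)
    have hn0 : (0:ℝ) < n := by linarith
    have hLg0 : (0:ℝ) < Real.logb 2 n := by linarith
    have hlb2A : 0 < Real.logb 2 A := Real.logb_pos one_lt_two hA1
    set m := lzm A n with hm
    have hm1 : (0:ℝ) < (m:ℝ) + 1 := by positivity
    -- counting
    have hflatlen : L.flatten.length = n := by rw [hflat, List.length_ofFn]
    set f : List X → Bool := fun w => decide (w.length ≤ m) with hf
    have hsplit : L.length = (L.filter f).length + (L.filter (fun w => !f w)).length :=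
      List.length_eq_length_filter_add f
    have hshort : (L.filter f).length ≤ (m+1) * Fintype.card X ^ m :=
      short_count m _ (hnd.filter f)
        (fun w hw => by simpa [hf] using List.of_mem_filter hw)
    have hlong : (m+1) * (L.filter (fun w => !f w)).length ≤ n := by
      rw [← hflatlen]
      exact long_count' m L _ (List.filter_sublist (p := fun w => !f w) (l := L))
        (fun w hw => by simpa [hf, Nat.not_le] using
          List.of_mem_filter hw)
    have hlongR : ((L.filter (fun w => !f w)).length : ℝ) ≤ (n:ℝ)/((m:ℝ)+1) := by
      rw [le_div_iff₀ hm1]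
      calc ((L.filter (fun w => !f w)).length : ℝ) * ((m:ℝ)+1)
          = (((m+1) * (L.filter (fun w => !f w)).length : ℕ) : ℝ) := by push_cast; ring
        _ ≤ (n:ℝ) := by exact_mod_cast hlong
    have hshortR : ((L.filter f).length : ℝ) ≤ ((m:ℝ)+1) * A ^ m := by
      calc ((L.filter f).length : ℝ) ≤ (((m+1) * Fintype.card X ^ m : ℕ) : ℝ) := by
            exact_mod_cast hshort
        _ = ((m:ℝ)+1) * A ^ m := by push_cast [hAdef]; ring
    have hB : (L.length : ℝ) ≤ lzB A n := by
      rw [lzB, ← hm]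
      rw [hsplit]
      push_cast
      linarith
    have hB0 : 0 < lzB A n := by
      rw [lzB, ← hm]
      have h1 : (0:ℝ) < (n:ℝ)/((m:ℝ)+1) := by positivity
      have h2 : (0:ℝ) ≤ ((m:ℝ)+1) * A ^ m := by positivity
      linarith
    have hna : (0:ℝ) < (n:ℝ) * Real.logb 2 A := by positivity
    have key : (1 - (1 - (lzt A n)⁻¹)) * Real.logb 2 n
        = (n:ℝ) * Real.logb 2 A / lzB A n := by
      rw [sub_sub_cancel, lzt, inv_div, div_mul_eq_mul_div,
        mul_div_mul_right _ _ hLg0.ne']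
    rw [key, div_div_eq_mul_div, mul_comm, mul_div_assoc, div_self hna.ne', mul_one]
    exact hB
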